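/- arXiv:2104.03930 — 3 statements merged into one kernel-verified Lean document; each statement's English description precedes it below -/
import Mathlib

section
/- If h₁ and h₂ are homeomorphisms of the closed ball B^n that agree on the boundary sphere S^{n-1}, then h₁ and h₂ are isotopic via an isotopy that fixes S^{n-1} pointwise: there exists a continuous H : B^n × [0,1] → B^n with H(·,0) = h₁, H(·,1) = h₂, each H(·,t) a homeomorphism, and H(x,t) = h₁(x) for all x ∈ S^{n-1} and all t. -/
open Metric

noncomputable section

/-- Retraction of the ambient space onto the closed unit ball. -/
noncomputable def ballProj (n : ℕ) (y : EuclideanSpace ℝ (Fin n)) :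
    closedBall (0 : EuclideanSpace ℝ (Fin n)) 1 :=
  ⟨(max 1 ‖y‖)⁻¹ • y, by
    have h1 : (0:ℝ) < max 1 ‖y‖ := lt_of_lt_of_le one_pos (le_max_left _ _)
    simp only [mem_closedBall, dist_zero_right, norm_smul, norm_inv, Real.norm_eq_abs,
      abs_of_pos h1]
    rw [inv_mul_le_iff₀ h1, mul_one]
    exact le_max_right _ _⟩

lemma ballProj_continuous (n : ℕ) : Continuous (ballProj n) := by
  apply Continuous.subtype_mk
  exact ((continuous_const.max continuous_norm).inv₀
    (fun y => (lt_of_lt_of_le one_pos (le_max_left _ _)).ne')).smul continuous_id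

lemma ballProj_of_mem {n : ℕ} {y : EuclideanSpace ℝ (Fin n)} (hy : ‖y‖ ≤ 1) :
    (ballProj n y : EuclideanSpace ℝ (Fin n)) = y := by
  simp [ballProj, max_eq_left hy]

/-- Extension of a self-map of the ball to the ambient space. -/
noncomputable def ballExt {n : ℕ}
    (k : (closedBall (0 : EuclideanSpace ℝ (Fin n)) 1) → (closedBall (0 : EuclideanSpace ℝ (Fin n)) 1))
    (y : EuclideanSpace ℝ (Fin n)) : EuclideanSpace ℝ (Fin n) :=
  (k (ballProj n y) : EuclideanSpace ℝ (Fin n))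

lemma ballExt_continuous {n : ℕ} {k} (hk : Continuous k) : Continuous (ballExt (n := n) k) :=
  continuous_subtype_val.comp (hk.comp (ballProj_continuous n))

lemma ballExt_norm_le {n : ℕ} (k) (y : EuclideanSpace ℝ (Fin n)) : ‖ballExt k y‖ ≤ 1 := by
  have := (k (ballProj n y)).2
  rw [mem_closedBall, dist_zero_right] at this
  exact this

lemma ballExt_of_mem {n : ℕ} (k) {y : EuclideanSpace ℝ (Fin n)}
    (hy : y ∈ closedBall (0 : EuclideanSpace ℝ (Fin n)) 1) :
    ballExt k y = (k ⟨y, hy⟩ : EuclideanSpace ℝ (Fin n)) := by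
  unfold ballExt
  congr 2
  exact Subtype.ext (ballProj_of_mem (by rwa [mem_closedBall, dist_zero_right] at hy))

lemma norm_le_one_mem {n : ℕ} {y : EuclideanSpace ℝ (Fin n)} (hy : ‖y‖ ≤ 1) :
    y ∈ closedBall (0 : EuclideanSpace ℝ (Fin n)) 1 := by
  rwa [mem_closedBall, dist_zero_right]

/-- The Alexander coning map at the ambient level. -/
noncomputable def core {n : ℕ}
    (k : (closedBall (0 : EuclideanSpace ℝ (Fin n)) 1) → (closedBall (0 : EuclideanSpace ℝ (Fin n)) 1))
    (p : EuclideanSpace ℝ (Fin n) × ℝ) : EuclideanSpace ℝ (Fin n) :=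
  if ‖p.1‖ ≤ p.2 then p.2 • ballExt k (p.2⁻¹ • p.1) else p.1

lemma cone_part_continuous {n : ℕ} {k} (hk : Continuous k) :
    Continuous (fun p : EuclideanSpace ℝ (Fin n) × ℝ =>
      p.2 • ballExt k (p.2⁻¹ • p.1)) := by
  rw [continuous_iff_continuousAt]
  rintro ⟨x, t⟩
  by_cases ht : t = 0
  · subst ht
    have hval : (fun p : EuclideanSpace ℝ (Fin n) × ℝ => p.2 • ballExt k (p.2⁻¹ • p.1)) (x, 0)
        = 0 := by simp
    unfold ContinuousAt
    rw [hval]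
    have hb : ∀ p : EuclideanSpace ℝ (Fin n) × ℝ,
        ‖p.2 • ballExt k (p.2⁻¹ • p.1)‖ ≤ |p.2| := by
      intro p
      rw [norm_smul, Real.norm_eq_abs]
      calc |p.2| * ‖ballExt k (p.2⁻¹ • p.1)‖ ≤ |p.2| * 1 :=
        mul_le_mul_of_nonneg_left (ballExt_norm_le k _) (abs_nonneg _)
      _ = |p.2| := mul_one _
    have htd : Filter.Tendsto (fun p : EuclideanSpace ℝ (Fin n) × ℝ => |p.2|)
        (nhds (x, (0:ℝ))) (nhds 0) := by
      have : Continuous (fun p : EuclideanSpace ℝ (Fin n) × ℝ => |p.2|) :=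
        continuous_snd.abs
      have h2 := this.continuousAt (x := (x, (0:ℝ)))
      unfold ContinuousAt at h2
      simpa using h2
    exact squeeze_zero_norm hb htd
  · exact (continuousAt_snd.smul
      (((ballExt_continuous hk).continuousAt).comp
        ((continuousAt_snd.inv₀ ht).smul continuousAt_fst)))

lemma core_continuous {n : ℕ} {k} (hk : Continuous k)
    (hfix : ∀ x : closedBall (0 : EuclideanSpace ℝ (Fin n)) 1,
      ‖(x : EuclideanSpace ℝ (Fin n))‖ = 1 → k x = x) :
    Continuous (core k) := by
  apply Continuous.if_le (cone_part_continuous hk) continuous_fst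
    (continuous_norm.comp continuous_fst) continuous_snd
  rintro ⟨x, t⟩ h
  have h' : ‖x‖ = t := h
  clear h
  show t • ballExt k (t⁻¹ • x) = x
  rcases eq_or_lt_of_le (norm_nonneg x) with h0 | h0
  · have hx : x = 0 := by
      have := h0.symm
      rwa [norm_eq_zero] at this
    have ht : t = 0 := by rw [← h', hx, norm_zero]
    simp [hx, ht]
  · have ht : 0 < t := h' ▸ h0
    have hmem : ‖t⁻¹ • x‖ = 1 := by
      rw [norm_smul, norm_inv, Real.norm_eq_abs, abs_of_pos ht, h',
        inv_mul_cancel₀ ht.ne']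
    have hymem := norm_le_one_mem hmem.le
    rw [ballExt_of_mem k hymem, hfix ⟨t⁻¹ • x, hymem⟩ hmem]
    exact smul_inv_smul₀ ht.ne' x

lemma core_mem {n : ℕ} (k) {x : EuclideanSpace ℝ (Fin n)} {t : ℝ}
    (hx : ‖x‖ ≤ 1) (ht : t ≤ 1) : ‖core k (x, t)‖ ≤ 1 := by
  unfold core
  split
  · rename_i h
    have ht0 : 0 ≤ t := le_trans (norm_nonneg x) h
    simp only
    rw [norm_smul, Real.norm_eq_abs, abs_of_nonneg ht0]
    calc t * ‖ballExt k (t⁻¹ • x)‖ ≤ t * 1 :=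
      mul_le_mul_of_nonneg_left (ballExt_norm_le k _) ht0
    _ = t := mul_one _
    _ ≤ 1 := ht
  · exact hx

lemma core_zero {n : ℕ} (k) (x : EuclideanSpace ℝ (Fin n)) : core k (x, 0) = x := by
  unfold core
  split
  · rename_i h
    have hx : x = 0 := by
      have : ‖x‖ = 0 := le_antisymm h (norm_nonneg x)
      rwa [norm_eq_zero] at this
    simp [hx]
  · rfl

lemma core_one {n : ℕ} (k) {x : EuclideanSpace ℝ (Fin n)}
    (hx : x ∈ closedBall (0 : EuclideanSpace ℝ (Fin n)) 1) :
    core k (x, 1) = (k ⟨x, hx⟩ : EuclideanSpace ℝ (Fin n)) := by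
  have hx' : ‖x‖ ≤ 1 := by rwa [mem_closedBall, dist_zero_right] at hx
  unfold core
  rw [if_pos hx']
  simp only [inv_one, one_smul]
  exact ballExt_of_mem k hx

lemma core_boundary {n : ℕ} (k)
    (hfix : ∀ x : closedBall (0 : EuclideanSpace ℝ (Fin n)) 1,
      ‖(x : EuclideanSpace ℝ (Fin n))‖ = 1 → k x = x)
    {x : EuclideanSpace ℝ (Fin n)} (hx : ‖x‖ = 1) {t : ℝ} (ht : t ≤ 1) :
    core k (x, t) = x := by
  unfold core
  split
  · rename_i h
    have ht1 : t = 1 := le_antisymm ht (hx ▸ h)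
    subst ht1
    simp only [inv_one, one_smul]
    have hmem := norm_le_one_mem hx.le
    rw [ballExt_of_mem k hmem, hfix ⟨x, hmem⟩ hx]
  · rfl

lemma core_comp {n : ℕ} (k k' :
      (closedBall (0 : EuclideanSpace ℝ (Fin n)) 1) → (closedBall (0 : EuclideanSpace ℝ (Fin n)) 1))
    (hinv : ∀ y, k' (k y) = y)
    (x : EuclideanSpace ℝ (Fin n)) {t : ℝ} (ht : 0 ≤ t) :
    core k' (core k (x, t), t) = x := by
  unfold core
  by_cases h : ‖x‖ ≤ t
  · rw [if_pos h]
    simp only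
    by_cases ht0 : t = 0
    · subst ht0
      have hx : x = 0 := by
        have : ‖x‖ = 0 := le_antisymm h (norm_nonneg x)
        rwa [norm_eq_zero] at this
      simp [hx]
    · have htpos : 0 < t := lt_of_le_of_ne ht (Ne.symm ht0)
      have hxt : ‖t⁻¹ • x‖ ≤ 1 := by
        rw [norm_smul, norm_inv, Real.norm_eq_abs, abs_of_pos htpos,
          inv_mul_le_iff₀ htpos, mul_one]
        exact h
      have hxtm := norm_le_one_mem hxt
      have hnorm2 : ‖t • ballExt k (t⁻¹ • x)‖ ≤ t := by
        rw [norm_smul, Real.norm_eq_abs, abs_of_pos htpos]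
        calc t * ‖ballExt k (t⁻¹ • x)‖ ≤ t * 1 :=
          mul_le_mul_of_nonneg_left (ballExt_norm_le k _) ht
        _ = t := mul_one _
      rw [if_pos hnorm2, inv_smul_smul₀ ht0]
      have hm2 : ballExt k (t⁻¹ • x) ∈ closedBall (0 : EuclideanSpace ℝ (Fin n)) 1 :=
        norm_le_one_mem (ballExt_norm_le k _)
      rw [ballExt_of_mem k' hm2]
      have : (⟨ballExt k (t⁻¹ • x), hm2⟩ :
          closedBall (0 : EuclideanSpace ℝ (Fin n)) 1) = k ⟨t⁻¹ • x, hxtm⟩ := by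
        apply Subtype.ext
        exact ballExt_of_mem k hxtm
      rw [this, hinv]
      exact smul_inv_smul₀ ht0 x
  · rw [if_neg h, if_neg h]

/-- The Alexander coning at time `t`, as a homeomorphism of the closed ball. -/
noncomputable def sliceHomeo {n : ℕ}
    (k : (closedBall (0 : EuclideanSpace ℝ (Fin n)) 1) ≃ₜ (closedBall (0 : EuclideanSpace ℝ (Fin n)) 1))
    (hfix : ∀ x : closedBall (0 : EuclideanSpace ℝ (Fin n)) 1,
      ‖(x : EuclideanSpace ℝ (Fin n))‖ = 1 → k x = x)
    (t : ℝ) (ht0 : 0 ≤ t) (ht1 : t ≤ 1) :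
    (closedBall (0 : EuclideanSpace ℝ (Fin n)) 1) ≃ₜ (closedBall (0 : EuclideanSpace ℝ (Fin n)) 1) where
  toFun x := ⟨core (⇑k) ((x : EuclideanSpace ℝ (Fin n)), t),
    norm_le_one_mem (core_mem _ (by
      have := x.2; rwa [mem_closedBall, dist_zero_right] at this) ht1)⟩
  invFun x := ⟨core (⇑k.symm) ((x : EuclideanSpace ℝ (Fin n)), t),
    norm_le_one_mem (core_mem _ (by
      have := x.2; rwa [mem_closedBall, dist_zero_right] at this) ht1)⟩
  left_inv x := by
    apply Subtype.ext
    exact core_comp (⇑k) (⇑k.symm) (fun y => k.symm_apply_apply y) _ ht0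
  right_inv x := by
    apply Subtype.ext
    exact core_comp (⇑k.symm) (⇑k) (fun y => k.apply_symm_apply y) _ ht0
  continuous_toFun := by
    apply Continuous.subtype_mk
    exact (core_continuous k.continuous hfix).comp
      (continuous_subtype_val.prodMk continuous_const)
  continuous_invFun := by
    apply Continuous.subtype_mk
    have hfix' : ∀ x : closedBall (0 : EuclideanSpace ℝ (Fin n)) 1,
        ‖(x : EuclideanSpace ℝ (Fin n))‖ = 1 → k.symm x = x := by
      intro x hx
      apply k.injective
      rw [k.apply_symm_apply, hfix x hx]
    exact (core_continuous k.symm.continuous hfix').comp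
      (continuous_subtype_val.prodMk continuous_const)

/-- The Alexander Trick: two homeomorphisms of the closed unit ball `B^n` that agree on the
boundary sphere `S^{n-1}` are isotopic via an isotopy fixing the boundary sphere pointwise. -/
theorem alexander_trick (n : ℕ)
    (h₁ h₂ : (closedBall (0 : EuclideanSpace ℝ (Fin n)) 1) ≃ₜ
      (closedBall (0 : EuclideanSpace ℝ (Fin n)) 1))
    (hbd : ∀ x : closedBall (0 : EuclideanSpace ℝ (Fin n)) 1,
      ‖(x : EuclideanSpace ℝ (Fin n))‖ = 1 → h₁ x = h₂ x) :
    ∃ H : (closedBall (0 : EuclideanSpace ℝ (Fin n)) 1) × (Set.Icc (0:ℝ) 1) →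
        (closedBall (0 : EuclideanSpace ℝ (Fin n)) 1),
      Continuous H ∧
      (∀ x, H (x, 0) = h₁ x) ∧
      (∀ x, H (x, 1) = h₂ x) ∧
      (∀ t : Set.Icc (0:ℝ) 1,
        ∃ e : (closedBall (0 : EuclideanSpace ℝ (Fin n)) 1) ≃ₜ
            (closedBall (0 : EuclideanSpace ℝ (Fin n)) 1),
          ∀ x, e x = H (x, t)) ∧
      (∀ x : closedBall (0 : EuclideanSpace ℝ (Fin n)) 1,
        ‖(x : EuclideanSpace ℝ (Fin n))‖ = 1 → ∀ t : Set.Icc (0:ℝ) 1, H (x, t) = h₁ x) := by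
  set k := h₂.trans h₁.symm with hk
  have hfixk : ∀ x : closedBall (0 : EuclideanSpace ℝ (Fin n)) 1,
      ‖(x : EuclideanSpace ℝ (Fin n))‖ = 1 → k x = x := by
    intro x hx
    show h₁.symm (h₂ x) = x
    rw [← hbd x hx, h₁.symm_apply_apply]
  refine ⟨fun p => h₁ ⟨core (⇑k) ((p.1 : EuclideanSpace ℝ (Fin n)), (p.2 : ℝ)),
      norm_le_one_mem (core_mem _ (by
        have := p.1.2; rwa [mem_closedBall, dist_zero_right] at this) p.2.2.2)⟩,
    ?_, ?_, ?_, ?_, ?_⟩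
  · apply h₁.continuous.comp
    apply Continuous.subtype_mk
    exact (core_continuous k.continuous hfixk).comp
      ((continuous_subtype_val.comp continuous_fst).prodMk
        (continuous_subtype_val.comp continuous_snd))
  · intro x
    refine congrArg h₁ (Subtype.ext ?_)
    exact core_zero (⇑k) _
  · intro x
    have h2 : h₁ (k x) = h₂ x := h₁.apply_symm_apply _
    refine Eq.trans (congrArg h₁ (Subtype.ext ?_)) h2
    exact core_one (⇑k) x.2
  · intro t
    refine ⟨(sliceHomeo k hfixk (t : ℝ) t.2.1 t.2.2).trans h₁, ?_⟩
    intro x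
    rfl
  · intro x hx t
    refine congrArg h₁ (Subtype.ext ?_)
    exact core_boundary (⇑k) hfixk hx t.2.2
end
end

section
/- The group of orientation-preserving homeomorphisms of S^1, with the compact-open topology, deformation retracts onto the subgroup of rotations; in particular it is homotopy equivalent to S^1 and is path-connected. -/
open Real

/-- A continuous self-map of the circle is an orientation-preserving homeomorphism if it is a
homeomorphism admitting a strictly increasing lift `h̃ : ℝ → ℝ` with `h̃(x+1) = h̃(x)+1`. -/
def IsOrientationPreservingCircleHomeo (h : C(Circle, Circle)) : Prop :=
  (∃ e : Circle ≃ₜ Circle, ∀ z, e z = h z) ∧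
  ∃ ht : ℝ → ℝ, StrictMono ht ∧ (∀ x, ht (x + 1) = ht x + 1) ∧
    ∀ x : ℝ, h (Circle.exp (2 * π * x)) = Circle.exp (2 * π * ht x)


noncomputable section
namespace Kneser1

def ee (x : ℝ) : Circle := Circle.exp (2 * π * x)

lemma ee_eq_iff {x y : ℝ} : ee x = ee y ↔ ∃ m : ℤ, x = y + m := by
  rw [ee, ee, Circle.exp_eq_exp]
  have hπ : (2:ℝ) * π ≠ 0 := by positivity
  exact ⟨fun ⟨m, hm⟩ => ⟨m, mul_left_cancel₀ hπ (by rw [hm]; ring)⟩,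
    fun ⟨m, hm⟩ => ⟨m, by rw [hm]; ring⟩⟩

lemma ee_surj : Function.Surjective ee := fun z =>
  ⟨Complex.arg z / (2 * π), by
    rw [ee, mul_div_cancel₀ _ (by positivity : (2:ℝ) * π ≠ 0)]
    exact Circle.exp_arg z⟩

lemma ee_add (x y : ℝ) : ee (x + y) = ee x * ee y := by
  rw [ee, ee, ee, mul_add, Circle.exp_add]

lemma ee_zero : ee 0 = 1 := by simp [ee]

lemma ee_cont : Continuous ee := Circle.exp.continuous.comp (by continuity)
lemma dist_ee (x y : ℝ) : dist (ee x) (ee y) = 2 * |sin (π * (x - y))| := by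
  have key : ∀ a b : ℝ, ‖Complex.exp (a * Complex.I) - Complex.exp (b * Complex.I)‖
      = 2 * |sin ((a - b) / 2)| := by
    intro a b
    rw [Complex.exp_mul_I, Complex.exp_mul_I]
    have : (Complex.cos a + Complex.sin a * Complex.I) - (Complex.cos b + Complex.sin b * Complex.I)
        = ((Real.cos a - Real.cos b : ℝ) : ℂ) + ((Real.sin a - Real.sin b : ℝ) : ℂ) * Complex.I := by
      push_cast [Complex.ofReal_cos, Complex.ofReal_sin]; ring
    rw [this, Complex.norm_add_mul_I]
    have h1 : (Real.cos a - Real.cos b) ^ 2 + (Real.sin a - Real.sin b) ^ 2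
        = (2 * |sin ((a - b) / 2)|) ^ 2 := by
      have e2 : Real.cos (a - b) = 2 * Real.cos ((a - b) / 2) ^ 2 - 1 := by
        rw [← Real.cos_two_mul]; ring_nf
      have e6 := Real.sin_sq_add_cos_sq ((a - b) / 2)
      have e3 : Real.cos (a - b) = Real.cos a * Real.cos b + Real.sin a * Real.sin b :=
        Real.cos_sub a b
      have e4 := Real.sin_sq_add_cos_sq a
      have e5 := Real.sin_sq_add_cos_sq b
      rw [mul_pow, sq_abs]
      nlinarith
    rw [h1, Real.sqrt_sq (by positivity)]
  have : dist (ee x) (ee y)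
      = ‖Complex.exp ((2*π*x : ℝ) * Complex.I) - Complex.exp ((2*π*y : ℝ) * Complex.I)‖ := by
    change dist (ee x : ℂ) (ee y : ℂ) = _; rw [Complex.dist_eq]; rfl
  rw [this, key]
  congr 2
  ring

lemma dist_ee_le (x y : ℝ) : dist (ee x) (ee y) ≤ 2 * π * |x - y| := by
  rw [dist_ee]
  calc 2 * |sin (π * (x - y))| ≤ 2 * |π * (x - y)| := by
        have := Real.abs_sin_le_abs (x := π * (x - y)); linarith
    _ = 2 * π * |x - y| := by rw [abs_mul, abs_of_pos Real.pi_pos]; ring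

lemma le_dist_ee {x y : ℝ} (h : |x - y| ≤ 1 / 2) : 4 * |x - y| ≤ dist (ee x) (ee y) := by
  rw [dist_ee]
  have h1 : 2 * |x - y| ≤ |sin (π * (x - y))| := by
    rcases abs_le.1 h with ⟨hl, hr⟩
    rcases le_or_gt 0 (x - y) with hxy | hxy
    · rw [abs_of_nonneg hxy]
      have hs : 2 / π * (π * (x - y)) ≤ sin (π * (x - y)) :=
        Real.mul_le_sin (by positivity)
          (by rw [mul_comm]; calc (x-y) * π ≤ (1/2) * π := by nlinarith [Real.pi_pos]
              _ = π / 2 := by ring)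
      have : 2 / π * (π * (x - y)) = 2 * (x - y) := by field_simp
      calc 2 * (x - y) = 2 / π * (π * (x - y)) := this.symm
        _ ≤ sin (π * (x - y)) := hs
        _ ≤ |sin (π * (x - y))| := le_abs_self _
    · rw [abs_of_neg (by linarith : x - y < 0)]
      have hs : 2 / π * (π * (y - x)) ≤ sin (π * (y - x)) :=
        Real.mul_le_sin (by nlinarith [Real.pi_pos])
          (by nlinarith [Real.pi_pos])
      have heq : sin (π * (y - x)) = - sin (π * (x - y)) := by
        rw [← Real.sin_neg]; ring_nf
      have : 2 / π * (π * (y - x)) = 2 * (y - x) := by field_simp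
      rw [this, heq] at hs
      calc 2 * -(x - y) = 2 * (y - x) := by ring
        _ ≤ - sin (π * (x - y)) := hs
        _ ≤ |sin (π * (x - y))| := neg_le_abs _
  linarith

/-- the homeomorphism `AddCircle 1 ≃ₜ Circle`, sending `↑x` to `ee x`. -/
def hc : AddCircle (1:ℝ) ≃ₜ Circle := AddCircle.homeomorphCircle one_ne_zero

lemma hc_mk (x : ℝ) : hc (x : AddCircle (1:ℝ)) = ee x := by
  rw [hc, AddCircle.homeomorphCircle_apply, AddCircle.toCircle_apply_mk, ee]
  norm_num

lemma hc_symm_ee (x : ℝ) : hc.symm (ee x) = (x : AddCircle (1:ℝ)) := by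
  rw [← hc_mk, Homeomorph.symm_apply_apply]

section descend
variable {g : ℝ → ℝ} (hg : Continuous g) (hp : ∀ x, g (x + 1) = g x + 1)

lemma per_aux (hp : ∀ x, g (x + 1) = g x + 1) : Function.Periodic (fun x => ee (g x)) 1 := by
  intro x
  simp only [hp x]
  exact ee_eq_iff.2 ⟨1, by push_cast; ring⟩

/-- descend `g` to a continuous self-map of the circle. -/
def mkC (g : ℝ → ℝ) (hg : Continuous g) (hp : ∀ x, g (x + 1) = g x + 1) : C(Circle, Circle) :=
  ⟨fun z => (per_aux hp).lift (hc.symm z),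
   by
    refine Continuous.comp ?_ hc.symm.continuous
    exact continuous_coinduced_dom.mpr (ee_cont.comp hg)⟩

lemma mkC_apply (x : ℝ) : mkC g hg hp (ee x) = ee (g x) := by
  show (per_aux hp).lift (hc.symm (ee x)) = ee (g x)
  rw [hc_symm_ee, Function.Periodic.lift_coe]

end descend

/-- A continuous integer-valued function on `ℝ` is constant. -/
lemma int_valued_const {d : ℝ → ℝ} (hd : Continuous d) (h : ∀ x, ∃ m : ℤ, d x = m) (x : ℝ) :
    d x = d 0 := by
  by_contra hne
  obtain ⟨b, hb⟩ := h x
  obtain ⟨a, ha⟩ := h 0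
  have hab : a ≠ b := by rintro rfl; exact hne (by rw [hb, ha])
  set v : ℝ := (max a b : ℤ) - 1 / 2 with hv
  have hvmem : v ∈ Set.uIcc (d 0) (d x) := by
    rw [ha, hb, Set.mem_uIcc]
    rcases le_total a b with hl | hl
    · have h1 : a + 1 ≤ b := by omega
      have h1' : (a:ℝ) + 1 ≤ (b:ℝ) := by exact_mod_cast h1
      have hm : max a b = b := max_eq_right hl
      rw [hv, hm]
      left; constructor <;> [linarith; linarith]
    · have h1 : b + 1 ≤ a := by omega
      have h1' : (b:ℝ) + 1 ≤ (a:ℝ) := by exact_mod_cast h1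
      have hm : max a b = a := max_eq_left hl
      rw [hv, hm]
      right; constructor <;> [linarith; linarith]
  obtain ⟨z, _, hz⟩ := intermediate_value_uIcc (hd.continuousOn (s := Set.uIcc 0 x)) hvmem
  obtain ⟨m, hm⟩ := h z
  rw [hm, hv] at hz
  have h2 : ((2 * m : ℤ) : ℝ) = ((2 * max a b - 1 : ℤ) : ℝ) := by
    push_cast [Int.cast_max] at hz ⊢
    linarith
  have h3 := Int.cast_injective h2
  omega

/-- lifts are unique up to an integer constant. -/
lemma lift_unique {g₁ g₂ : ℝ → ℝ} (h₁ : Continuous g₁) (h₂ : Continuous g₂)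
    (h : ∀ x, ee (g₁ x) = ee (g₂ x)) : ∃ k : ℤ, ∀ x, g₁ x = g₂ x + k := by
  have hint : ∀ x, ∃ m : ℤ, g₁ x - g₂ x = m := by
    intro x
    obtain ⟨m, hm⟩ := ee_eq_iff.1 (h x)
    exact ⟨m, by linarith⟩
  obtain ⟨k, hk⟩ := hint 0
  refine ⟨k, fun x => ?_⟩
  have := int_valued_const (h₁.sub h₂) hint x
  rw [Pi.sub_apply, Pi.sub_apply, hk] at this
  linarith

lemma per_int {f : ℝ → ℝ} (hp : ∀ x, f (x + 1) = f x + 1) (x : ℝ) (m : ℤ) :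
    f (x + m) = f x + m := by
  induction m using Int.induction_on with
  | zero => simp
  | succ n ih => push_cast at ih ⊢; rw [show x + (n + 1) = (x + n) + 1 by ring, hp, ih]; ring
  | pred n ih =>
      push_cast at ih ⊢
      have := hp (x + (-n - 1))
      rw [show x + (-n - 1) + 1 = x + -n by ring] at this
      rw [show x + (-(n:ℝ) - 1) = x + (-n - 1) by ring]
      rw [ih] at this
      linarith

/-- a continuous function with `f(x+1) = f(x)+1` is surjective. -/
lemma surj_of_per {f : ℝ → ℝ} (hf : Continuous f) (hp : ∀ x, f (x + 1) = f x + 1) :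
    Function.Surjective f := by
  intro y
  obtain ⟨n, hn⟩ := exists_nat_ge (|y - f 0|)
  have key : ∀ m : ℤ, f m = f 0 + m := fun m => by simpa using per_int hp 0 m
  have habs := abs_le.1 hn
  have h1 : f ((-(n:ℤ) : ℤ) : ℝ) ≤ y := by
    rw [key]; push_cast; linarith [habs.1]
  have h2 : y ≤ f (((n:ℤ) : ℤ) : ℝ) := by
    rw [key]; push_cast; linarith [habs.2]
  have hy : y ∈ Set.uIcc (f ((-(n:ℤ) : ℤ) : ℝ)) (f (((n:ℤ) : ℤ) : ℝ)) :=
    Set.mem_uIcc.2 (Or.inl ⟨h1, h2⟩)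
  obtain ⟨z, _, hz⟩ := intermediate_value_uIcc (hf.continuousOn) hy
  exact ⟨z, hz⟩


abbrev Sub := {h : C(Circle, Circle) // IsOrientationPreservingCircleHomeo h}

/-- the chosen lift of `h`. -/
def lft (h : Sub) : ℝ → ℝ := Classical.choose h.2.2

lemma lft_mono (h : Sub) : StrictMono (lft h) := (Classical.choose_spec h.2.2).1
lemma lft_per (h : Sub) : ∀ x, lft h (x + 1) = lft h x + 1 := (Classical.choose_spec h.2.2).2.1
lemma lft_ee (h : Sub) : ∀ x, h.1 (ee x) = ee (lft h x) := (Classical.choose_spec h.2.2).2.2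

lemma lft_surj (h : Sub) : Function.Surjective (lft h) := by
  intro y
  obtain ⟨e, he⟩ := h.2.1
  obtain ⟨x, hx⟩ := ee_surj (e.symm (ee y))
  have hxy : h.1 (ee x) = ee y := by rw [← he, hx, Homeomorph.apply_symm_apply]
  rw [lft_ee] at hxy
  obtain ⟨m, hm⟩ := ee_eq_iff.1 hxy
  refine ⟨x + (-m : ℤ), ?_⟩
  rw [per_int (lft_per h) x (-m), hm]
  push_cast
  ring

/-- the chosen lift as an order isomorphism of `ℝ`. -/
def lftIso (h : Sub) : ℝ ≃o ℝ := StrictMono.orderIsoOfSurjective _ (lft_mono h) (lft_surj h)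

lemma lftIso_apply (h : Sub) (x : ℝ) : lftIso h x = lft h x := rfl

lemma lft_cont (h : Sub) : Continuous (lft h) := by
  have := (lftIso h).continuous
  exact this

lemma lftIso_symm_per (h : Sub) (y : ℝ) : (lftIso h).symm (y + 1) = (lftIso h).symm y + 1 := by
  apply (lftIso h).injective
  rw [OrderIso.apply_symm_apply]
  have : lftIso h ((lftIso h).symm y + 1) = lft h ((lftIso h).symm y + 1) := rfl
  rw [this, lft_per, ← lftIso_apply, OrderIso.apply_symm_apply]

/-- A strictly monotone surjective period-respecting map descends to a homeomorphism. -/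
def mkHomeo (g : ℝ → ℝ) (hg : Continuous g) (hp : ∀ x, g (x + 1) = g x + 1)
    (ginv : ℝ → ℝ) (hginv : Continuous ginv) (hpinv : ∀ x, ginv (x + 1) = ginv x + 1)
    (hgi : ∀ x, ginv (g x) = x) (hig : ∀ x, g (ginv x) = x) : Circle ≃ₜ Circle where
  toFun := mkC g hg hp
  invFun := mkC ginv hginv hpinv
  left_inv z := by
    obtain ⟨x, rfl⟩ := ee_surj z
    rw [mkC_apply, mkC_apply, hgi]
  right_inv z := by
    obtain ⟨x, rfl⟩ := ee_surj z
    rw [mkC_apply, mkC_apply, hig]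
  continuous_toFun := (mkC g hg hp).continuous
  continuous_invFun := (mkC ginv hginv hpinv).continuous

/-- descending a strictly monotone, periodicity-respecting surjection gives an
orientation-preserving homeomorphism. -/
lemma isOPH_mkC {g : ℝ → ℝ} (hmono : StrictMono g) (hsurj : Function.Surjective g)
    (hg : Continuous g) (hp : ∀ x, g (x + 1) = g x + 1) :
    IsOrientationPreservingCircleHomeo (mkC g hg hp) := by
  set E : ℝ ≃o ℝ := StrictMono.orderIsoOfSurjective _ hmono hsurj with hE
  have hEg : ∀ x, E x = g x := fun _ => rfl
  have hginv : ∀ x, g (E.symm x) = x := fun x => by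
    have := E.apply_symm_apply x
    rwa [hEg] at this
  have hpinv : ∀ x, E.symm (x + 1) = E.symm x + 1 := by
    intro x
    apply E.injective
    rw [OrderIso.apply_symm_apply, hEg, hp, hginv]
  constructor
  · exact ⟨mkHomeo g hg hp E.symm E.symm.continuous hpinv
      (fun x => by rw [← hEg, E.symm_apply_apply]) hginv,
      fun z => rfl⟩
  · exact ⟨g, hmono, hp, fun x => mkC_apply hg hp x⟩


/-- the straight-line homotopy of lifts. -/
def gfun (h : Sub) (t : ℝ) (x : ℝ) : ℝ := (1 - t) * lft h x + t * x + t * lft h 0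

lemma gfun_mono (h : Sub) {t : ℝ} (ht0 : 0 ≤ t) (ht1 : t ≤ 1) : StrictMono (gfun h t) := by
  intro x y hxy
  have hL := lft_mono h hxy
  rw [gfun, gfun]
  rcases ht1.lt_or_eq with h1 | h1
  · have A : (1 - t) * lft h x < (1 - t) * lft h y := by nlinarith
    have B : t * x ≤ t * y := by nlinarith
    linarith
  · subst h1
    nlinarith

lemma gfun_per (h : Sub) (t : ℝ) : ∀ x, gfun h t (x + 1) = gfun h t x + 1 := by
  intro x
  rw [gfun, gfun, lft_per h]
  ring

lemma gfun_cont (h : Sub) (t : ℝ) : Continuous (gfun h t) := by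
  exact ((continuous_const.mul (lft_cont h)).add (continuous_const.mul continuous_id)).add
    continuous_const

lemma gfun_surj (h : Sub) (t : ℝ) : Function.Surjective (gfun h t) :=
  surj_of_per (gfun_cont h t) (gfun_per h t)

/-- The deformation retraction. -/
def Hmap (h : Sub) (t : Set.Icc (0:ℝ) 1) : Sub :=
  ⟨mkC (gfun h t.1) (gfun_cont h t.1) (gfun_per h t.1),
   isOPH_mkC (gfun_mono h t.2.1 t.2.2) (gfun_surj h t.1) (gfun_cont h t.1) (gfun_per h t.1)⟩

lemma Hmap_apply (h : Sub) (t : Set.Icc (0:ℝ) 1) (x : ℝ) :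
    (Hmap h t).1 (ee x) = ee (gfun h t.1 x) := mkC_apply (gfun_cont h t.1) (gfun_per h t.1) x

lemma Hmap_zero (h : Sub) : Hmap h 0 = h := by
  refine Subtype.ext (ContinuousMap.ext fun z => ?_)
  obtain ⟨x, rfl⟩ := ee_surj z
  rw [Hmap_apply, lft_ee h]
  congr 1
  show (1 - (0:ℝ)) * lft h x + 0 * x + 0 * lft h 0 = lft h x
  ring

lemma Hmap_one (h : Sub) (z : Circle) : (Hmap h 1).1 z = h.1 1 * z := by
  obtain ⟨x, rfl⟩ := ee_surj z
  rw [Hmap_apply]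
  have h1 : gfun h (1:ℝ) x = lft h 0 + x := by rw [gfun]; ring
  have h2 : ((1 : Set.Icc (0:ℝ) 1) : ℝ) = (1:ℝ) := rfl
  rw [h2, h1, ee_add]
  congr 1
  rw [← lft_ee h 0, ee_zero]

lemma lft_of_rot (h : Sub) (w : Circle) (hw : ∀ z, h.1 z = w * z) (x : ℝ) :
    lft h x = x + lft h 0 := by
  obtain ⟨c, hc⟩ := ee_surj w
  have key : ∀ y, ee (lft h y) = ee (y + c) := by
    intro y
    rw [← lft_ee h, hw, ee_add, mul_comm, ← hc]
  obtain ⟨k, hk⟩ := lift_unique (lft_cont h) (by continuity) key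
  have h0 := hk 0
  have hx := hk x
  rw [zero_add] at h0
  rw [hx, h0]
  ring

lemma Hmap_rot (h : Sub) (w : Circle) (hw : ∀ z, h.1 z = w * z) (t : Set.Icc (0:ℝ) 1) :
    Hmap h t = h := by
  refine Subtype.ext (ContinuousMap.ext fun z => ?_)
  obtain ⟨x, rfl⟩ := ee_surj z
  rw [Hmap_apply, lft_ee h]
  congr 1
  rw [gfun, lft_of_rot h w hw x]
  ring


lemma ee_add_int (x : ℝ) (m : ℤ) : ee (x + m) = ee x := ee_eq_iff.2 ⟨m, rfl⟩

/-- if a continuous function stays within `1/4` of the integers, its rounding is constant. -/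
lemma round_const {d : ℝ → ℝ} (hd : Continuous d)
    (hsmall : ∀ x, |d x - round (d x)| < 1/4) (x : ℝ) : round (d x) = round (d 0) := by
  by_contra hne
  set a := round (d 0) with ha
  set b := round (d x) with hb
  have hax := hsmall 0
  have hbx := hsmall x
  rw [← ha] at hax
  rw [← hb] at hbx
  have hax' := abs_lt.1 hax
  have hbx' := abs_lt.1 hbx
  set v : ℝ := (max a b : ℤ) - 1/2 with hv
  have hvmem : v ∈ Set.uIcc (d 0) (d x) := by
    rw [Set.mem_uIcc]
    rcases le_total a b with hl | hl
    · have h1 : a + 1 ≤ b := by omega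
      have h1' : (a:ℝ) + 1 ≤ (b:ℝ) := by exact_mod_cast h1
      have hm : max a b = b := max_eq_right hl
      rw [hv, hm]
      left; constructor <;> [linarith; linarith]
    · have h1 : b + 1 ≤ a := by omega
      have h1' : (b:ℝ) + 1 ≤ (a:ℝ) := by exact_mod_cast h1
      have hm : max a b = a := max_eq_left hl
      rw [hv, hm]
      right; constructor <;> [linarith; linarith]
  obtain ⟨z, _, hz⟩ := intermediate_value_uIcc (hd.continuousOn (s := Set.uIcc 0 x)) hvmem
  have hzz0 := hsmall z
  set m := round (d z) with hmdef
  rw [hz, hv] at hzz0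
  have hzz := abs_lt.1 hzz0
  set K := max a b with hK
  have h1 : (0:ℝ) < ((K - m : ℤ) : ℝ) := by push_cast; linarith [hzz.1, hzz.2]
  have h2 : ((K - m : ℤ) : ℝ) < 1 := by push_cast; linarith [hzz.1, hzz.2]
  have hA : 0 < K - m := by exact_mod_cast h1
  have hB : K - m < 1 := by exact_mod_cast h2
  omega

/-- a monotone function commuting with translation has displacement bounded by `|f 0| + 1`. -/
lemma per_bound {f : ℝ → ℝ} (hm : Monotone f) (hp : ∀ x, f (x + 1) = f x + 1) (x : ℝ) :
    |f x - x| ≤ |f 0| + 1 := by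
  have key := per_int hp (x - ⌊x⌋) ⌊x⌋
  rw [show x - (⌊x⌋:ℝ) + (⌊x⌋:ℝ) = x by ring] at key
  have hy0 : 0 ≤ x - (⌊x⌋:ℝ) := by linarith [Int.floor_le x]
  have hy1 : x - (⌊x⌋:ℝ) ≤ 1 := by linarith [(Int.lt_floor_add_one x).le]
  have hf1 : f 1 = f 0 + 1 := by simpa using hp 0
  have hfy0 : f 0 ≤ f (x - ⌊x⌋) := hm hy0
  have hfy1 : f (x - ⌊x⌋) ≤ f 0 + 1 := hf1 ▸ hm hy1
  have h1 := le_abs_self (f 0)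
  have h2 := neg_abs_le (f 0)
  apply abs_le.2
  constructor <;> linarith


set_option maxHeartbeats 2000000 in
lemma Hmap_cont_val :
    Continuous (fun p : Sub × Set.Icc (0:ℝ) 1 => ((Hmap p.1 p.2).1 : C(Circle, Circle))) := by
  rw [Metric.continuous_iff]
  rintro ⟨h₀, t₀⟩ ε hε
  set M : ℝ := |lft h₀ 0| + 1 with hMdef
  have hM0 : 0 ≤ M := by positivity
  have hMabs : |lft h₀ 0| ≤ M := by rw [hMdef]; linarith
  clear_value M
  obtain ⟨Cst, hCst⟩ : ∃ c : ℝ, c = 2 * π * (1/2 + M + M) + 1 := ⟨_, rfl⟩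
  have hCst1 : 1 ≤ Cst := by
    have h0 : (0:ℝ) ≤ 2 * π * (1/2 + M + M) := by positivity
    linarith
  obtain ⟨δ, hδdef⟩ : ∃ d : ℝ, d = min 1 (ε / Cst) := ⟨_, rfl⟩
  have hδpos : 0 < δ := hδdef ▸ lt_min one_pos (div_pos hε (by linarith))
  have hδ1 : δ ≤ 1 := hδdef ▸ min_le_left _ _
  have hδε : δ * Cst ≤ ε := by
    have h1 : δ ≤ ε / Cst := hδdef ▸ min_le_right _ _
    have h2 := mul_le_mul_of_nonneg_right h1 (by linarith : (0:ℝ) ≤ Cst)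
    rwa [div_mul_cancel₀ _ (by linarith : Cst ≠ 0)] at h2
  refine ⟨δ, hδpos, ?_⟩
  rintro ⟨h, t⟩ hq
  rw [Prod.dist_eq] at hq
  have hq1 : dist h h₀ < δ := lt_of_le_of_lt (le_max_left _ _) hq
  have hq2 : dist t t₀ < δ := lt_of_le_of_lt (le_max_right _ _) hq
  -- pointwise distance of the two maps
  have hdist_pt : ∀ x : ℝ, dist (ee (lft h x)) (ee (lft h₀ x)) < δ := by
    intro x
    rw [← lft_ee h, ← lft_ee h₀]
    calc dist (h.1 (ee x)) (h₀.1 (ee x)) ≤ dist h.1 h₀.1 :=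
          ContinuousMap.dist_apply_le_dist _
      _ = dist h h₀ := (Subtype.dist_eq h h₀).symm
      _ < δ := hq1
  -- the lifts are close to each other up to a fixed integer
  have hd_cont : Continuous (fun x => lft h x - lft h₀ x) := (lft_cont h).sub (lft_cont h₀)
  have hsmall : ∀ x, |(lft h x - lft h₀ x) - round (lft h x - lft h₀ x)| < δ/4 := by
    intro x
    have hround := abs_sub_round (lft h x - lft h₀ x)
    have h4 : 4 * |lft h x - (lft h₀ x + round (lft h x - lft h₀ x))|
        ≤ dist (ee (lft h x)) (ee (lft h₀ x + round (lft h x - lft h₀ x))) := by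
      apply le_dist_ee
      have heq : lft h x - (lft h₀ x + (round (lft h x - lft h₀ x) : ℤ))
          = (lft h x - lft h₀ x) - round (lft h x - lft h₀ x) := by ring
      rw [heq]
      exact hround
    rw [ee_add_int] at h4
    have h5 := hdist_pt x
    have heq2 : |(lft h x - lft h₀ x) - (round (lft h x - lft h₀ x) : ℤ)|
        = |lft h x - (lft h₀ x + (round (lft h x - lft h₀ x) : ℤ))| := by
      congr 1; ring
    rw [heq2]
    linarith
  have hsmall' : ∀ x, |(lft h x - lft h₀ x) - round (lft h x - lft h₀ x)| < 1/4 := fun x =>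
    lt_of_lt_of_le (hsmall x) (by linarith)
  obtain ⟨k, hk⟩ : ∃ m : ℤ, m = round (lft h 0 - lft h₀ 0) := ⟨_, rfl⟩
  have hdk : ∀ x, |(lft h x - lft h₀ x) - k| < δ/4 := by
    intro x
    rw [hk, ← round_const hd_cont hsmall' x]
    exact hsmall x
  -- bounds on the parameters
  have ht01 := t.2
  have ht01' := t₀.2
  have htt : |(t:ℝ) - (t₀:ℝ)| < δ := by
    rw [Subtype.dist_eq, Real.dist_eq] at hq2
    exact hq2
  -- the main pointwise bound on the lifts of the homotopy
  have hbound : ∀ x : ℝ, |(gfun h t x - k) - gfun h₀ t₀ x| ≤ δ * (Cst - 1) / (2*π) := by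
    intro x
    have e1 : (gfun h t x - (k:ℝ)) - gfun h₀ t₀ x
        = (1 - (t:ℝ)) * ((lft h x - lft h₀ x) - k) + ((t₀:ℝ) - t) * (lft h₀ x - x)
          + (t:ℝ) * ((lft h 0 - lft h₀ 0) - k) + ((t:ℝ) - t₀) * lft h₀ 0 := by
      rw [gfun, gfun]; ring
    have b1 : |(1 - (t:ℝ)) * ((lft h x - lft h₀ x) - k)| ≤ δ/4 := by
      rw [abs_mul]
      have h1 : |1 - (t:ℝ)| ≤ 1 := by
        rw [abs_le]; constructor <;> [linarith [ht01.2]; linarith [ht01.1]]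
      nlinarith [(hdk x).le, abs_nonneg ((lft h x - lft h₀ x) - (k:ℝ))]
    have b2 : |((t₀:ℝ) - t) * (lft h₀ x - x)| ≤ δ * M := by
      rw [abs_mul]
      have h1 : |(t₀:ℝ) - t| ≤ δ := by rw [abs_sub_comm]; exact htt.le
      have h2 : |lft h₀ x - x| ≤ M := by
        rw [hMdef]
        exact per_bound (lft_mono h₀).monotone (lft_per h₀) x
      nlinarith [abs_nonneg ((t₀:ℝ) - t), abs_nonneg (lft h₀ x - x)]
    have b3 : |(t:ℝ) * ((lft h 0 - lft h₀ 0) - k)| ≤ δ/4 := by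
      rw [abs_mul]
      have h1 : |(t:ℝ)| ≤ 1 := by
        rw [abs_le]; constructor <;> [linarith [ht01.1]; linarith [ht01.2]]
      nlinarith [(hdk 0).le, abs_nonneg ((lft h 0 - lft h₀ 0) - (k:ℝ))]
    have b4 : |((t:ℝ) - t₀) * lft h₀ 0| ≤ δ * M := by
      rw [abs_mul]
      nlinarith [htt.le, abs_nonneg ((t:ℝ) - t₀), abs_nonneg (lft h₀ 0), hMabs,
        abs_nonneg (lft h₀ 0)]
    have ha1 := abs_add_le ((1 - (t:ℝ)) * ((lft h x - lft h₀ x) - k) + ((t₀:ℝ) - t) * (lft h₀ x - x)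
      + (t:ℝ) * ((lft h 0 - lft h₀ 0) - k)) (((t:ℝ) - t₀) * lft h₀ 0)
    have ha2 := abs_add_le ((1 - (t:ℝ)) * ((lft h x - lft h₀ x) - k)
      + ((t₀:ℝ) - t) * (lft h₀ x - x)) ((t:ℝ) * ((lft h 0 - lft h₀ 0) - k))
    have ha3 := abs_add_le ((1 - (t:ℝ)) * ((lft h x - lft h₀ x) - k)) (((t₀:ℝ) - t) * (lft h₀ x - x))
    have hceq : δ * (Cst - 1) / (2*π) = δ * (1/2 + M + M) := by
      rw [hCst]
      field_simp
      ring
    rw [e1, hceq]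
    linarith
  -- conclude: sup distance bound
  have hC0 : (0:ℝ) ≤ δ * (Cst - 1) := by nlinarith
  have hfinal : dist ((Hmap h t).1 : C(Circle, Circle)) ((Hmap h₀ t₀).1 : C(Circle, Circle))
      ≤ δ * (Cst - 1) := by
    rw [ContinuousMap.dist_le hC0]
    intro z
    obtain ⟨x, rfl⟩ := ee_surj z
    rw [Hmap_apply, Hmap_apply]
    have he : ee (gfun h t x) = ee (gfun h t x - k) := by
      conv_lhs => rw [show gfun h (t:ℝ) x = (gfun h t x - (k:ℝ)) + (k:ℤ) by push_cast; ring]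
      exact ee_add_int _ k
    rw [he]
    calc dist (ee (gfun h t x - k)) (ee (gfun h₀ t₀ x))
        ≤ 2 * π * |(gfun h t x - k) - gfun h₀ t₀ x| := dist_ee_le _ _
      _ ≤ 2 * π * (δ * (Cst - 1) / (2*π)) := by
          have hb := hbound x
          have hpp : (0:ℝ) < 2 * π := by positivity
          nlinarith
      _ = δ * (Cst - 1) := by field_simp
  calc dist ((Hmap h t).1 : C(Circle, Circle)) ((Hmap h₀ t₀).1 : C(Circle, Circle))
      ≤ δ * (Cst - 1) := hfinal
    _ < δ * Cst := by nlinarith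
    _ ≤ ε := hδε

lemma Hmap_cont : Continuous (fun p : Sub × Set.Icc (0:ℝ) 1 => Hmap p.1 p.2) :=
  Continuous.subtype_mk Hmap_cont_val _


lemma Hmap_cont_swap' : Continuous ((fun p : Sub × Set.Icc (0:ℝ) 1 => Hmap p.1 p.2) ∘
    (fun p : unitInterval × Sub => (p.2, p.1))) :=
  Hmap_cont.comp (continuous_snd.prodMk continuous_fst)

lemma Hmap_cont_swap : Continuous (fun p : unitInterval × Sub => Hmap p.2 p.1) := by
  have := Hmap_cont_swap'
  simp only [Function.comp_def] at this
  exact this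

lemma Hmap_cont_curry (h : Sub) : Continuous (fun t : unitInterval => Hmap h t) := by
  have : Continuous ((fun p : Sub × Set.Icc (0:ℝ) 1 => Hmap p.1 p.2) ∘
      (fun t : unitInterval => (h, t))) :=
    Hmap_cont.comp (continuous_const.prodMk continuous_id)
  simpa only [Function.comp_def] using this

/-- chosen argument of a circle point. -/
def carg (w : Circle) : ℝ := Classical.choose (ee_surj w)

lemma ee_carg (w : Circle) : ee (carg w) = w := Classical.choose_spec (ee_surj w)

/-- rotation by `w` as an element of the subtype. -/
def rotsub (w : Circle) : Sub :=
  ⟨⟨fun z => w * z, by continuity⟩, by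
    constructor
    · exact ⟨Homeomorph.mulLeft w, fun z => rfl⟩
    · refine ⟨fun x => x + carg w, fun a b hab => by simpa using hab, fun x => by ring, fun x => ?_⟩
      show w * ee x = ee (x + carg w)
      rw [ee_add, mul_comm (ee x), ee_carg]⟩

lemma rotsub_cont : Continuous rotsub := by
  apply Continuous.subtype_mk
  exact ContinuousMap.continuous_of_continuous_uncurry _ continuous_mul

/-- evaluation at `1` as a continuous map `Sub → Circle`. -/
def evalmap : C(Sub, Circle) :=
  ⟨fun h => h.1 1, (continuous_eval_const 1).comp continuous_subtype_val⟩

/-- rotations as a continuous map `Circle → Sub`. -/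
def rotmap : C(Circle, Sub) := ⟨rotsub, rotsub_cont⟩

lemma Hmap_one' (h : Sub) : Hmap h 1 = rotsub (h.1 1) :=
  Subtype.ext (ContinuousMap.ext fun z => Hmap_one h z)

/-- the deformation retraction as a homotopy. -/
def homot : ContinuousMap.Homotopy (ContinuousMap.id Sub) (rotmap.comp evalmap) where
  toFun := fun p => Hmap p.2 p.1
  continuous_toFun := Hmap_cont_swap
  map_zero_left x := Hmap_zero x
  map_one_left x := Hmap_one' x

/-- the homotopy equivalence with the circle. -/
def hEquiv : ContinuousMap.HomotopyEquiv Sub Circle where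
  toFun := evalmap
  invFun := rotmap
  left_inv := ⟨homot.symm⟩
  right_inv := by
    rw [show evalmap.comp rotmap = ContinuousMap.id Circle from
      ContinuousMap.ext fun w => mul_one w]

/-- the path from `h` to the rotation by `h 1`. -/
def pathToRot (h : Sub) : Path h (rotsub (h.1 1)) where
  toFun := fun t => Hmap h t
  continuous_toFun := Hmap_cont_curry h
  source' := Hmap_zero h
  target' := Hmap_one' h

/-- a path between two rotations. -/
def rotPath (w w' : Circle) : Path (rotsub w) (rotsub w') where
  toFun := fun t => rotsub (ee (carg w + t * (carg w' - carg w)))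
  continuous_toFun := by
    apply rotsub_cont.comp
    apply ee_cont.comp
    continuity
  source' := by simp [ee_carg]
  target' := by simp [ee_carg]

instance : PathConnectedSpace Sub where
  nonempty := ⟨rotsub 1⟩
  joined h h' :=
    (Joined.trans ⟨pathToRot h⟩ ⟨rotPath (h.1 1) (h'.1 1)⟩).trans ⟨(pathToRot h').symm⟩

end Kneser1


end

/-- Kneser's theorem in dimension 1: the group `Homeo₊(S¹)` of orientation-preserving
homeomorphisms of the circle, with the compact-open topology, deformation retracts onto the
rotations; in particular it is homotopy equivalent to `S¹` and is path-connected. -/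
theorem homeoPlusCircle_deformation_retracts_to_rotations :
    (∃ H : {h : C(Circle, Circle) // IsOrientationPreservingCircleHomeo h} →
        (Set.Icc (0:ℝ) 1) → {h : C(Circle, Circle) // IsOrientationPreservingCircleHomeo h},
      Continuous (fun p : {h : C(Circle, Circle) // IsOrientationPreservingCircleHomeo h} ×
          (Set.Icc (0:ℝ) 1) => H p.1 p.2) ∧
      (∀ h, H h 0 = h) ∧
      (∀ h, ∃ w : Circle, ∀ z, (H h 1).1 z = w * z) ∧
      (∀ h, (∃ w : Circle, ∀ z, h.1 z = w * z) → ∀ t, H h t = h)) ∧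
    Nonempty (ContinuousMap.HomotopyEquiv
      {h : C(Circle, Circle) // IsOrientationPreservingCircleHomeo h} Circle) ∧
    PathConnectedSpace {h : C(Circle, Circle) // IsOrientationPreservingCircleHomeo h} := by
  refine ⟨⟨Kneser1.Hmap, Kneser1.Hmap_cont, Kneser1.Hmap_zero,
    fun h => ⟨h.1 1, Kneser1.Hmap_one h⟩, ?_⟩, ⟨Kneser1.hEquiv⟩, inferInstance⟩
  rintro h ⟨w, hw⟩ t
  exact Kneser1.Hmap_rot h w hw t
end

section
/- Let f : S^n → S^n be a homeomorphism that is the identity on a nonempty open subset U. Then there is a closed embedded ball D ⊂ U (image of B^n under a chart) fixed pointwise by f, such that the closure of S^n \ D is homeomorphic to B^n, and f restricts to a homeomorphism of this complementary ball fixing its boundary; consequently f is isotopic to the identity of S^n. -/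
open Metric Module
open scoped RealInnerProductSpace Classical

noncomputable section

instance factFinrankEuclidean (n : ℕ) :
    Fact (finrank ℝ (EuclideanSpace ℝ (Fin (n + 1))) = n + 1) :=
  ⟨finrank_euclideanSpace_fin⟩

namespace SphereIsotopyAux

variable {n : ℕ}

local notation "E" => EuclideanSpace ℝ (Fin (n + 1))
local notation "Q" => EuclideanSpace ℝ (Fin n)
local notation "S" => sphere (0 : EuclideanSpace ℝ (Fin (n + 1))) 1

lemma norm_proj_orthog_sq (v x : E) (hv : ‖v‖ = 1) :
    ‖(Submodule.orthogonalProjection (ℝ ∙ v)ᗮ x : E)‖ ^ 2 = ‖x‖ ^ 2 - ⟪v, x⟫ ^ 2 := by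
  have h := Submodule.norm_sq_eq_add_norm_sq_projection x (ℝ ∙ v)
  have h2 : ‖(Submodule.orthogonalProjection (ℝ ∙ v) x : E)‖ = |⟪v, x⟫| := by
    rw [← Submodule.starProjection_apply, Submodule.starProjection_singleton]
    simp [norm_smul, hv, abs_div]
  have h3 : ‖Submodule.orthogonalProjection (ℝ ∙ v) x‖ = |⟪v, x⟫| := by
    rw [← h2]; rfl
  have h4 : ‖Submodule.orthogonalProjection (ℝ ∙ v)ᗮ x‖ = ‖(Submodule.orthogonalProjection (ℝ ∙ v)ᗮ x : E)‖ := rfl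
  rw [h3, h4] at h
  have : |⟪v, x⟫| ^ 2 = ⟪v, x⟫ ^ 2 := sq_abs _
  linarith

lemma norm_stereographic'_sq (v x : S) (hx : x ≠ v) :
    ‖stereographic' n v x‖ ^ 2 = 4 * (1 + ⟪(v : E), (x : E)⟫) / (1 - ⟪(v : E), (x : E)⟫) := by
  have hv : ‖(v : E)‖ = 1 := norm_eq_of_mem_sphere v
  have hx1 : ‖(x : E)‖ = 1 := norm_eq_of_mem_sphere x
  have ht : ⟪(v : E), (x : E)⟫ < 1 :=
    (inner_lt_one_iff_real_of_norm_eq_one hv hx1).mpr fun h => hx (Subtype.ext h.symm)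
  have h1t : (1 : ℝ) - ⟪(v : E), (x : E)⟫ ≠ 0 := by linarith
  have h1 : ‖stereographic' n v x‖ = ‖stereographic (norm_eq_of_mem_sphere v) x‖ := by
    rw [stereographic', OpenPartialHomeomorph.trans_apply]
    exact LinearIsometryEquiv.norm_map (OrthonormalBasis.fromOrthogonalSpanSingleton n (ne_zero_of_mem_unit_sphere v)).repr _
  have h2 : stereographic (norm_eq_of_mem_sphere v) x =
      (2 / ((1 : ℝ) - ⟪(v : E), (x : E)⟫)) • Submodule.orthogonalProjection (ℝ ∙ (v : E))ᗮ (x : E) :=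
    stereographic_apply _ _
  have h3 : ‖stereographic (norm_eq_of_mem_sphere v) x‖ =
      ‖2 / ((1 : ℝ) - ⟪(v : E), (x : E)⟫)‖ * ‖(Submodule.orthogonalProjection (ℝ ∙ (v : E))ᗮ (x : E) : E)‖ := by
    rw [h2, norm_smul]; rfl
  have h4 := norm_proj_orthog_sq (v : E) (x : E) hv
  rw [h1, h3, mul_pow, Real.norm_eq_abs, sq_abs, h4, hx1, one_pow]
  generalize hgen : ⟪(v : E), (x : E)⟫ = t at h1t ⊢
  field_simp
  ring

lemma norm_stereographic'_mul (v x : S) (hx : x ≠ v) (hx' : x ≠ -v) :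
    ‖stereographic' n v x‖ * ‖stereographic' n (-v) x‖ = 4 := by
  have hv : ‖(v : E)‖ = 1 := norm_eq_of_mem_sphere v
  have hx1 : ‖(x : E)‖ = 1 := norm_eq_of_mem_sphere x
  have ht : ⟪(v : E), (x : E)⟫ < 1 :=
    (inner_lt_one_iff_real_of_norm_eq_one hv hx1).mpr fun h => hx (Subtype.ext h.symm)
  have ht' : ⟪((-v : S) : E), (x : E)⟫ < 1 := by
    refine (inner_lt_one_iff_real_of_norm_eq_one (norm_eq_of_mem_sphere _) hx1).mpr
      fun h => hx' (Subtype.ext h.symm)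
  have hcoe : ((-v : S) : E) = -(v : E) := coe_neg_sphere v
  rw [hcoe, inner_neg_left] at ht'
  have h1 := norm_stereographic'_sq v x hx
  have h2 := norm_stereographic'_sq (-v) x hx'
  rw [hcoe, inner_neg_left] at h2
  generalize hgen : ⟪(v : E), (x : E)⟫ = t at h1 h2 ht ht'
  have h1t : (1 : ℝ) - t ≠ 0 := by linarith
  have h2t : (1 : ℝ) + t ≠ 0 := by linarith
  have hsq : (‖stereographic' n v x‖ * ‖stereographic' n (-v) x‖) ^ 2 = 16 := by
    rw [mul_pow, h1, h2, sub_neg_eq_add]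
    field_simp
    ring
  have hnn : 0 ≤ ‖stereographic' n v x‖ * ‖stereographic' n (-v) x‖ :=
    mul_nonneg (norm_nonneg _) (norm_nonneg _)
  nlinarith [hsq, hnn]


/-! ### Chart helper lemmas -/

lemma symm_continuous (v : S) : Continuous (stereographic' n v).symm := by
  have h := (stereographic' n v).continuousOn_symm
  rw [stereographic'_target] at h
  exact continuousOn_univ.mp h

lemma symm_ne (v : S) (y : Q) : (stereographic' n v).symm y ≠ v := by
  have h := (stereographic' n v).map_target (x := y)
    (by rw [stereographic'_target]; trivial)
  rw [stereographic'_source] at h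
  exact h

lemma right_inv' (v : S) (y : Q) : stereographic' n v ((stereographic' n v).symm y) = y :=
  (stereographic' n v).right_inv (by rw [stereographic'_target]; trivial)

lemma left_inv' (v : S) {x : S} (hx : x ≠ v) :
    (stereographic' n v).symm (stereographic' n v x) = x :=
  (stereographic' n v).left_inv (by rw [stereographic'_source]; exact hx)

lemma source_inter_preimage_eq_image (v : S) (A : Set Q) :
    (stereographic' n v).source ∩ (stereographic' n v) ⁻¹' A
      = (stereographic' n v).symm '' A := by
  ext x
  constructor
  · rintro ⟨hx, hxA⟩
    exact ⟨stereographic' n v x, hxA, (stereographic' n v).left_inv hx⟩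
  · rintro ⟨y, hyA, rfl⟩
    refine ⟨by rw [stereographic'_source]; exact symm_ne v y, ?_⟩
    rw [Set.mem_preimage, right_inv']
    exact hyA

lemma isClosed_symm_image_closedBall (v : S) (r : ℝ) :
    IsClosed ((stereographic' n v).symm '' closedBall 0 r) :=
  ((isCompact_closedBall (0 : Q) r).image (symm_continuous v)).isClosed

/-- The preimage of a closed ball under a stereographic chart is homeomorphic to the standard
closed unit ball. -/
lemma ballHomeo (v : S) {r : ℝ} (hr : 0 < r) :
    Nonempty ((((stereographic' n v).symm '' closedBall 0 r : Set S))
      ≃ₜ (closedBall (0 : Q) 1)) := by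
  set ψ := stereographic' n v with hψ
  have key : Nonempty (((ψ.source ∩ ψ ⁻¹' closedBall 0 r : Set S)) ≃ₜ (closedBall (0 : Q) 1)) := by
    refine ⟨⟨⟨fun x => ⟨r⁻¹ • ψ x.1, ?_⟩, fun y => ⟨ψ.symm (r • y.1), ?_, ?_⟩, ?_, ?_⟩, ?_, ?_⟩⟩
    · have h1 : ‖ψ x.1‖ ≤ r := by
        have := x.2.2
        rwa [Set.mem_preimage, mem_closedBall_zero_iff] at this
      rw [mem_closedBall_zero_iff]
      calc ‖r⁻¹ • ψ x.1‖ = r⁻¹ * ‖ψ x.1‖ := by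
            rw [norm_smul, Real.norm_eq_abs, abs_of_nonneg (inv_nonneg.mpr hr.le)]
        _ ≤ r⁻¹ * r := by gcongr
        _ = 1 := inv_mul_cancel₀ hr.ne'
    · rw [hψ, stereographic'_source]
      exact symm_ne v _
    · rw [Set.mem_preimage, right_inv' v, mem_closedBall_zero_iff]
      have h1 : ‖y.1‖ ≤ 1 := by
        have := y.2; rwa [mem_closedBall_zero_iff] at this
      calc ‖r • y.1‖ = r * ‖y.1‖ := by
            rw [norm_smul, Real.norm_eq_abs, abs_of_nonneg hr.le]
        _ ≤ r * 1 := by gcongr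
        _ = r := mul_one r
    · intro x
      apply Subtype.ext
      show ψ.symm (r • r⁻¹ • ψ x.1) = x.1
      rw [smul_smul, mul_inv_cancel₀ hr.ne', one_smul]
      exact ψ.left_inv x.2.1
    · intro y
      apply Subtype.ext
      show r⁻¹ • ψ (ψ.symm (r • y.1)) = y.1
      rw [right_inv' v, smul_smul, inv_mul_cancel₀ hr.ne', one_smul]
    · exact Continuous.subtype_mk
        (((ψ.continuousOn.mono Set.inter_subset_left).restrict).const_smul r⁻¹) _
    · exact Continuous.subtype_mk
        (((symm_continuous v).comp (continuous_subtype_val.const_smul r))) _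
  obtain ⟨e⟩ := key
  exact ⟨(Homeomorph.setCongr (source_inter_preimage_eq_image v _).symm).trans e⟩

/-! ### Extending a compactly-supported homeomorphism of the chart to the sphere -/

lemma fix_symm {G : Q ≃ₜ Q} {R : ℝ} (hG : ∀ y, R ≤ ‖y‖ → G y = y) :
    ∀ y : Q, R ≤ ‖y‖ → G.symm y = y := by
  intro y hy
  conv_lhs => rw [← hG y hy]
  exact G.symm_apply_apply y

lemma ext_continuous (p : S) {g : Q → Q} (hg : Continuous g) {R : ℝ}
    (hfix : ∀ y, R ≤ ‖y‖ → g y = y) :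
    Continuous (fun x : S =>
      if x = p then p else (stereographic' n p).symm (g (stereographic' n p x))) := by
  set ψ := stereographic' n p with hψ
  rw [continuous_iff_continuousAt]
  intro x₀
  by_cases hx₀ : x₀ = p
  · subst hx₀
    set V := (ψ.symm '' closedBall 0 R)ᶜ with hV
    have hVopen : IsOpen V := (isClosed_symm_image_closedBall x₀ R).isOpen_compl
    have hpV : x₀ ∈ V := by
      intro hmem
      obtain ⟨y, -, hy⟩ := hmem
      exact symm_ne x₀ y hy
    have hid : ∀ x ∈ V, (if x = x₀ then x₀ else ψ.symm (g (ψ x))) = x := by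
      intro x hx
      by_cases hxp : x = x₀
      · rw [if_pos hxp, hxp]
      · rw [if_neg hxp]
        have hR : R ≤ ‖ψ x‖ := by
          by_contra hlt
          push_neg at hlt
          exact hx ⟨ψ x, mem_closedBall_zero_iff.mpr hlt.le, left_inv' x₀ hxp⟩
        rw [hfix _ hR]
        exact left_inv' x₀ hxp
    exact continuousAt_id.congr
      ((Filter.eventuallyEq_of_mem (hVopen.mem_nhds hpV) hid).symm)
  · have h1 : ContinuousAt (fun x : S => ψ.symm (g (ψ x))) x₀ := by
      refine ((symm_continuous p).continuousAt).comp
        ((hg.continuousAt).comp (ψ.continuousAt ?_))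
      rw [hψ, stereographic'_source]
      exact hx₀
    refine h1.congr ?_
    have hopen : IsOpen {x : S | x ≠ p} := isOpen_compl_singleton
    refine Filter.eventuallyEq_of_mem (hopen.mem_nhds hx₀) ?_
    intro x hx
    simp only [if_neg hx]

lemma exists_extension (p : S) (G : Q ≃ₜ Q) {R : ℝ} (hG : ∀ y, R ≤ ‖y‖ → G y = y) :
    ∃ e : S ≃ₜ S, ∀ x : S,
      e x = if x = p then p else (stereographic' n p).symm (G (stereographic' n p x)) := by
  set ψ := stereographic' n p with hψ
  refine ⟨⟨⟨fun x => if x = p then p else ψ.symm (G (ψ x)),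
            fun x => if x = p then p else ψ.symm (G.symm (ψ x)), ?_, ?_⟩, ?_, ?_⟩,
          fun x => rfl⟩
  · intro x
    by_cases hx : x = p
    · subst hx; simp
    · show (if (if x = p then p else ψ.symm (G (ψ x))) = p then p
          else ψ.symm (G.symm (ψ (if x = p then p else ψ.symm (G (ψ x)))))) = x
      rw [if_neg hx, if_neg (symm_ne p (G (ψ x))), right_inv' p, G.symm_apply_apply,
        left_inv' p hx]
  · intro x
    by_cases hx : x = p
    · subst hx; simp
    · show (if (if x = p then p else ψ.symm (G.symm (ψ x))) = p then p
          else ψ.symm (G (ψ (if x = p then p else ψ.symm (G.symm (ψ x)))))) = x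
      rw [if_neg hx, if_neg (symm_ne p (G.symm (ψ x))), right_inv' p, G.apply_symm_apply,
        left_inv' p hx]
  · exact ext_continuous p G.continuous hG
  · exact ext_continuous p G.symm.continuous (fix_symm hG)


/-! ### The Alexander trick kernel -/

/-- Alexander trick: scaled conjugate of `g`, equal to `g` at `s = 1` and to the identity
at `s ≤ 0`. -/
def alexK (g : Q → Q) (y : Q) (s : ℝ) : Q :=
  y + (if 0 < s then s • (g (s⁻¹ • y) - s⁻¹ • y) else 0)

lemma alexK_of_not_pos (g : Q → Q) (y : Q) {s : ℝ} (hs : ¬0 < s) : alexK g y s = y := by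
  simp [alexK, hs]

lemma alexK_one (g : Q → Q) (y : Q) : alexK g y 1 = g y := by
  simp [alexK]

lemma alexK_pos (g : Q → Q) (y : Q) {s : ℝ} (hs : 0 < s) :
    alexK g y s = s • g (s⁻¹ • y) := by
  rw [alexK, if_pos hs, smul_sub, smul_inv_smul₀ hs.ne']
  abel

lemma alexK_fix (g : Q → Q) {R s : ℝ} (hfix : ∀ z, R ≤ ‖z‖ → g z = z) (hs1 : s ≤ 1)
    {y : Q} (hy : R ≤ ‖y‖) : alexK g y s = y := by
  by_cases hs : 0 < s
  · have h1 : (1 : ℝ) ≤ s⁻¹ := one_le_inv_iff₀.mpr ⟨hs, hs1⟩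
    have h2 : R ≤ ‖s⁻¹ • y‖ := by
      rw [norm_smul, Real.norm_eq_abs, abs_of_pos (inv_pos.mpr hs)]
      nlinarith [norm_nonneg y]
    rw [alexK_pos g y hs, hfix _ h2, smul_inv_smul₀ hs.ne']
  · exact alexK_of_not_pos g y hs

lemma alexK_continuous {g : Q → Q} (hg : Continuous g) {M : ℝ} (hM0 : 0 ≤ M)
    (hM : ∀ z, ‖g z - z‖ ≤ M) :
    Continuous fun q : Q × ℝ => alexK g q.1 q.2 := by
  have hA : Continuous fun q : Q × ℝ =>
      (if 0 < q.2 then q.2 • (g (q.2⁻¹ • q.1) - q.2⁻¹ • q.1) else 0) := by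
    rw [continuous_iff_continuousAt]
    rintro ⟨y₀, s₀⟩
    rcases lt_trichotomy 0 s₀ with h | h | h
    · have hca : ContinuousAt
          (fun q : Q × ℝ => q.2 • (g (q.2⁻¹ • q.1) - q.2⁻¹ • q.1)) (y₀, s₀) := by
        have hinv : ContinuousAt (fun q : Q × ℝ => q.2⁻¹ • q.1) (y₀, s₀) :=
          (continuousAt_snd.inv₀ h.ne').smul continuousAt_fst
        exact continuousAt_snd.smul ((hg.continuousAt.comp hinv).sub hinv)
      refine hca.congr ?_
      have hopen : IsOpen {q : Q × ℝ | 0 < q.2} := isOpen_lt continuous_const continuous_snd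
      refine Filter.eventuallyEq_of_mem (hopen.mem_nhds h) ?_
      intro q hq
      exact (if_pos hq).symm
    · subst h
      have hval : (if (0 : ℝ) < (y₀, (0:ℝ)).2 then
          (y₀, (0:ℝ)).2 • (g ((y₀, (0:ℝ)).2⁻¹ • (y₀, (0:ℝ)).1) - (y₀, (0:ℝ)).2⁻¹ • (y₀, (0:ℝ)).1)
          else 0) = 0 := by
        simp
      unfold ContinuousAt
      simp only []
      rw [hval]
      have hbound : ∀ q : Q × ℝ,
          ‖(if 0 < q.2 then q.2 • (g (q.2⁻¹ • q.1) - q.2⁻¹ • q.1) else 0)‖ ≤ |q.2| * M := by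
        intro q
        by_cases hq : 0 < q.2
        · rw [if_pos hq, norm_smul, Real.norm_eq_abs]
          exact mul_le_mul_of_nonneg_left (hM _) (abs_nonneg _)
        · rw [if_neg hq, norm_zero]
          exact mul_nonneg (abs_nonneg _) hM0
      have htend : Filter.Tendsto (fun q : Q × ℝ => |q.2| * M) (nhds (y₀, (0:ℝ)))
          (nhds 0) := by
        have hc : Continuous (fun q : Q × ℝ => |q.2| * M) :=
          continuous_snd.abs.mul continuous_const
        have := hc.tendsto ((y₀, (0:ℝ)) : Q × ℝ)
        simpa using this
      exact squeeze_zero_norm hbound htend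
    · have hopen : IsOpen {q : Q × ℝ | q.2 < 0} := isOpen_lt continuous_snd continuous_const
      refine (continuousAt_const (y := (0 : Q))).congr ?_
      refine Filter.eventuallyEq_of_mem (hopen.mem_nhds h) ?_
      intro q hq
      exact (if_neg (not_lt.mpr (le_of_lt hq))).symm
  exact continuous_fst.add hA

lemma stereographic'_neg' (v : S) : stereographic' n (-v) v = 0 := by
  rw [stereographic', OpenPartialHomeomorph.trans_apply]
  show (OrthonormalBasis.fromOrthogonalSpanSingleton n (ne_zero_of_mem_unit_sphere (-v))).repr (stereographic (norm_eq_of_mem_sphere (-v)) v) = 0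
  rw [stereographic_neg_apply, map_zero]

lemma ne_neg_self (v : S) : v ≠ -v := by
  intro h
  have h2 : (v : E) = -(v : E) := (congrArg Subtype.val h).trans (coe_neg_sphere v)
  have h3 : (v : E) = 0 := by
    have h4 : (2 : ℝ) • (v : E) = 0 := by
      rw [two_smul]; exact eq_neg_iff_add_eq_zero.mp h2
    have h5 := smul_eq_zero.mp h4
    exact h5.resolve_left (by norm_num)
  have h4 : ‖(v : E)‖ = 1 := norm_eq_of_mem_sphere v
  rw [h3, norm_zero] at h4
  exact zero_ne_one h4

end SphereIsotopyAux

open SphereIsotopyAux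

/-- If a homeomorphism `f` of `Sⁿ` is the identity on a nonempty open set `U`, then there is a
closed embedded ball `D ⊆ U` fixed pointwise by `f` whose complement has closure an embedded
ball, `f` restricts to that complementary ball fixing its boundary, and consequently `f` is
isotopic to the identity of `Sⁿ`. -/
theorem homeo_fixing_open_set_isotopic_to_id (n : ℕ)
    (f : (sphere (0 : EuclideanSpace ℝ (Fin (n + 1))) 1) ≃ₜ
      (sphere (0 : EuclideanSpace ℝ (Fin (n + 1))) 1))
    (U : Set (sphere (0 : EuclideanSpace ℝ (Fin (n + 1))) 1))
    (hU : IsOpen U) (hUne : U.Nonempty) (hfix : ∀ x ∈ U, f x = x) :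
    (∃ D : Set (sphere (0 : EuclideanSpace ℝ (Fin (n + 1))) 1),
      IsClosed D ∧ D ⊆ U ∧ (∀ x ∈ D, f x = x) ∧
      Nonempty (D ≃ₜ (closedBall (0 : EuclideanSpace ℝ (Fin n)) 1)) ∧
      Nonempty ((closure Dᶜ : Set (sphere (0 : EuclideanSpace ℝ (Fin (n + 1))) 1)) ≃ₜ
        (closedBall (0 : EuclideanSpace ℝ (Fin n)) 1)) ∧
      Set.MapsTo f (closure Dᶜ) (closure Dᶜ) ∧
      (∀ x ∈ frontier D, f x = x)) ∧
    ∃ H : (sphere (0 : EuclideanSpace ℝ (Fin (n + 1))) 1) × (Set.Icc (0:ℝ) 1) →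
        (sphere (0 : EuclideanSpace ℝ (Fin (n + 1))) 1),
      Continuous H ∧ (∀ x, H (x, 0) = f x) ∧ (∀ x, H (x, 1) = x) ∧
      (∀ t : Set.Icc (0:ℝ) 1,
        ∃ e : (sphere (0 : EuclideanSpace ℝ (Fin (n + 1))) 1) ≃ₜ
          (sphere (0 : EuclideanSpace ℝ (Fin (n + 1))) 1), ∀ x, e x = H (x, t)) := by
  classical
  obtain ⟨p, hp⟩ := hUne
  have hpnegp : p ≠ -p := ne_neg_self p
  have hfp : f p = p := hfix p hp
  -- the point `p` is sent to `0` by `φ`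
  have hφp : stereographic' n (-p) p = 0 := stereographic'_neg' p
  have hψnegp : stereographic' n p (-p) = 0 := by
    have h := stereographic'_neg' (-p)
    rwa [neg_neg] at h
  have hφsymm0 : (stereographic' n (-p)).symm 0 = p := by rw [← hφp]; exact left_inv' (-p) hpnegp
  -- choose the radius `r`
  have hopen2 : IsOpen ((stereographic' n (-p)).symm ⁻¹' U) := hU.preimage (symm_continuous (-p))
  have h0mem : (0 : EuclideanSpace ℝ (Fin n)) ∈ (stereographic' n (-p)).symm ⁻¹' U := by
    rw [Set.mem_preimage, hφsymm0]; exact hp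
  obtain ⟨ε, hε, hball⟩ := Metric.isOpen_iff.mp hopen2 0 h0mem
  set r := ε / 2 with hrdef
  have hr : 0 < r := by positivity
  have hDball : closedBall (0 : EuclideanSpace ℝ (Fin n)) r ⊆ (stereographic' n (-p)).symm ⁻¹' U :=
    (closedBall_subset_ball (by rw [hrdef]; linarith)).trans hball
  set D := (stereographic' n (-p)).symm '' closedBall 0 r with hDdef
  have hDeq : (stereographic' n (-p)).source ∩ (stereographic' n (-p)) ⁻¹' closedBall 0 r = D := source_inter_preimage_eq_image (-p) _
  have hDclosed : IsClosed D := isClosed_symm_image_closedBall (-p) r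
  have hDsub : D ⊆ U := by rintro x ⟨y, hy, rfl⟩; exact hDball hy
  have hDfix : ∀ x ∈ D, f x = x := fun x hx => hfix x (hDsub hx)
  -- the complementary ball
  set s := 4 / r with hsdef
  have hs : 0 < s := by positivity
  have hrs : r * s = 4 := by
    rw [hsdef, mul_div_assoc']
    rw [mul_comm, mul_div_assoc]
    rw [div_self hr.ne', mul_one]
  have hpD : p ∈ D := by
    rw [← hDeq]
    refine ⟨by rw [stereographic'_source]; exact hpnegp, ?_⟩
    rw [Set.mem_preimage, hφp, mem_closedBall_zero_iff, norm_zero]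
    exact hr.le
  have hDc : Dᶜ = (stereographic' n p).symm '' ball 0 s := by
    rw [← source_inter_preimage_eq_image p (ball 0 s)]
    ext x
    by_cases hxp : x = p
    · subst hxp
      simp only [Set.mem_compl_iff, Set.mem_inter_iff, Set.mem_preimage]
      constructor
      · intro hmem; exact absurd hpD hmem
      · rintro ⟨hsrc, -⟩
        rw [stereographic'_source] at hsrc
        exact absurd rfl hsrc
    · by_cases hxnp : x = -p
      · subst hxnp
        simp only [Set.mem_compl_iff, Set.mem_inter_iff, Set.mem_preimage]
        constructor
        · intro _
          refine ⟨by rw [stereographic'_source]; exact (Ne.symm hpnegp), ?_⟩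
          rw [hψnegp, mem_ball_zero_iff, norm_zero]; exact hs
        · intro _
          rw [← hDeq]
          rintro ⟨hsrc, -⟩
          rw [stereographic'_source] at hsrc
          exact hsrc rfl
      · have hab : ‖stereographic' n p x‖ * ‖stereographic' n (-p) x‖ = 4 := norm_stereographic'_mul p x hxp hxnp
        have ha : 0 < ‖stereographic' n (-p) x‖ := by
          rcases (norm_nonneg (stereographic' n (-p) x)).lt_or_eq with h | h
          · exact h
          · exfalso; rw [← h, mul_zero] at hab; norm_num at hab
        have hb : 0 < ‖stereographic' n p x‖ := by
          rcases (norm_nonneg (stereographic' n p x)).lt_or_eq with h | h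
          · exact h
          · exfalso; rw [← h, zero_mul] at hab; norm_num at hab
        simp only [Set.mem_compl_iff, Set.mem_inter_iff, Set.mem_preimage, ← hDeq,
          mem_ball_zero_iff, mem_closedBall_zero_iff]
        have hxsrc : x ∈ (stereographic' n (-p)).source := by rw [stereographic'_source]; exact hxnp
        have hxsrc' : x ∈ (stereographic' n p).source := by rw [stereographic'_source]; exact hxp
        constructor
        · intro hmem
          have hgt : r < ‖stereographic' n (-p) x‖ := by
            by_contra hle
            exact hmem ⟨hxsrc, not_lt.mp hle⟩
          exact ⟨hxsrc', by nlinarith⟩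
        · rintro ⟨-, hlt⟩ ⟨-, hle⟩
          nlinarith
  have hCc : closure Dᶜ = (stereographic' n p).symm '' closedBall 0 s := by
    apply Set.Subset.antisymm
    · apply closure_minimal _ (isClosed_symm_image_closedBall p s)
      rw [hDc]; exact Set.image_mono ball_subset_closedBall
    · rw [← closure_ball (0 : EuclideanSpace ℝ (Fin n)) hs.ne', hDc]
      exact image_closure_subset_closure_image (symm_continuous p)
  have hmapsDc : Set.MapsTo f Dᶜ Dᶜ := by
    intro x hx hfx
    apply hx
    have h1 : f (f x) = f x := hfix _ (hDsub hfx)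
    have h2 : f x = x := f.injective h1
    rwa [h2] at hfx
  constructor
  · refine ⟨D, hDclosed, hDsub, hDfix, ballHomeo (-p) hr, ?_, ?_, ?_⟩
    · rw [hCc]; exact ballHomeo p hs
    · intro x hx
      have h1 : f '' closure Dᶜ ⊆ closure (f '' Dᶜ) :=
        image_closure_subset_closure_image f.continuous
      have h2 : closure (f '' Dᶜ) ⊆ closure Dᶜ := closure_mono (Set.mapsTo_iff_image_subset.mp hmapsDc)
      exact h2 (h1 ⟨x, hx, rfl⟩)
    · intro x hx
      exact hDfix x (hDclosed.frontier_subset hx)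
  · -- Part 2: the isotopy via the Alexander trick
    -- the conjugated homeomorphism of the chart
    have hfnep : ∀ y, f ((stereographic' n p).symm y) ≠ p := by
      intro y h
      exact symm_ne p y (f.injective (by rw [h, hfp]))
    have hfsp : f.symm p = p := by
      apply f.injective; rw [f.apply_symm_apply, hfp]
    have hfsnep : ∀ y, f.symm ((stereographic' n p).symm y) ≠ p := by
      intro y h
      exact symm_ne p y (f.symm.injective (by rw [h, hfsp]))
    have hGc : Continuous
        (fun y => stereographic' n p (f ((stereographic' n p).symm y))) := by
      refine (stereographic' n p).continuousOn.comp_continuous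
        (f.continuous.comp (symm_continuous p)) ?_
      intro y; rw [stereographic'_source]; exact hfnep y
    have hGc' : Continuous
        (fun y => stereographic' n p (f.symm ((stereographic' n p).symm y))) := by
      refine (stereographic' n p).continuousOn.comp_continuous
        (f.symm.continuous.comp (symm_continuous p)) ?_
      intro y; rw [stereographic'_source]; exact hfsnep y
    let G : EuclideanSpace ℝ (Fin n) ≃ₜ EuclideanSpace ℝ (Fin n) :=
      { toFun := fun y => stereographic' n p (f ((stereographic' n p).symm y))
        invFun := fun y => stereographic' n p (f.symm ((stereographic' n p).symm y))
        left_inv := fun y => by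
          simp only []
          rw [left_inv' p (hfnep y), f.symm_apply_apply, right_inv' p]
        right_inv := fun y => by
          simp only []
          rw [left_inv' p (hfsnep y), f.apply_symm_apply, right_inv' p]
        continuous_toFun := hGc
        continuous_invFun := hGc' }
    have hGapp : ∀ y, G y = stereographic' n p (f ((stereographic' n p).symm y)) :=
      fun _ => rfl
    -- `G` is the identity far from the origin
    have hUcc : IsCompact (Uᶜ : Set (sphere (0 : EuclideanSpace ℝ (Fin (n + 1))) 1)) :=
      hU.isClosed_compl.isCompact
    have hUcsub : (Uᶜ : Set (sphere (0 : EuclideanSpace ℝ (Fin (n + 1))) 1))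
        ⊆ (stereographic' n p).source := by
      intro x hx
      rw [stereographic'_source]
      intro h
      rw [Set.mem_singleton_iff] at h
      subst h
      exact hx hp
    have hImg : IsCompact (stereographic' n p '' Uᶜ) :=
      hUcc.image_of_continuousOn ((stereographic' n p).continuousOn.mono hUcsub)
    obtain ⟨R₀, hR₀⟩ := (Metric.isBounded_iff_subset_closedBall 0).mp hImg.isBounded
    set R := max R₀ 0 + 1 with hRdef
    have hR1 : 0 < R := by
      have : (0 : ℝ) ≤ max R₀ 0 := le_max_right _ _
      rw [hRdef]; linarith
    have hRfar : ∀ y, R ≤ ‖y‖ → (stereographic' n p).symm y ∈ U := by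
      intro y hy
      by_contra hyU
      have h1 : y ∈ stereographic' n p '' Uᶜ := ⟨_, hyU, right_inv' p y⟩
      have h2 := hR₀ h1
      rw [mem_closedBall_zero_iff] at h2
      have : R₀ ≤ max R₀ 0 := le_max_left _ _
      rw [hRdef] at hy
      linarith
    have hGfix : ∀ y, R ≤ ‖y‖ → G y = y := by
      intro y hy
      rw [hGapp, hfix _ (hRfar y hy), right_inv' p]
    -- a bound for the displacement of `G`
    obtain ⟨M₀, hM₀⟩ := (isCompact_closedBall (0 : EuclideanSpace ℝ (Fin n)) R).exists_bound_of_continuousOn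
      ((G.continuous.sub continuous_id).continuousOn)
    have hM0 : (0 : ℝ) ≤ max M₀ 0 := le_max_right _ _
    have hM : ∀ z, ‖G z - z‖ ≤ max M₀ 0 := by
      intro z
      by_cases hz : z ∈ closedBall (0 : EuclideanSpace ℝ (Fin n)) R
      · exact le_trans (hM₀ z hz) (le_max_left _ _)
      · rw [mem_closedBall_zero_iff] at hz
        rw [hGfix z (not_le.mp hz).le, sub_self, norm_zero]
        exact hM0
    have hKcont : Continuous (fun q : (EuclideanSpace ℝ (Fin n)) × ℝ => alexK G q.1 q.2) :=
      alexK_continuous G.continuous hM0 hM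
    refine ⟨fun q => if q.1 = p then p
        else (stereographic' n p).symm (alexK G (stereographic' n p q.1) (1 - (q.2 : ℝ))),
      ?_, ?_, ?_, ?_⟩
    · -- continuity of the homotopy
      rw [continuous_iff_continuousAt]
      rintro ⟨x₀, t₀⟩
      by_cases hx₀ : x₀ = p
      · subst hx₀
        have hVopen : IsOpen ((stereographic' n x₀).symm '' closedBall 0 R)ᶜ :=
          (isClosed_symm_image_closedBall x₀ R).isOpen_compl
        refine (continuous_fst.continuousAt).congr ?_
        refine Filter.eventuallyEq_of_mem
          (((hVopen.preimage continuous_fst).mem_nhds ?_) :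
            (Prod.fst ⁻¹' ((stereographic' n x₀).symm '' closedBall 0 R)ᶜ) ∈
              nhds ((x₀, t₀) : (sphere (0 : EuclideanSpace ℝ (Fin (n + 1))) 1) × (Set.Icc (0:ℝ) 1))) ?_
        · intro hmem
          obtain ⟨y, -, hy⟩ := hmem
          exact symm_ne x₀ y hy
        · rintro ⟨x, t⟩ hq
          show x = if x = x₀ then x₀
            else (stereographic' n x₀).symm (alexK (⇑G) (stereographic' n x₀ x) (1 - (t : ℝ)))
          by_cases hxp : x = x₀
          · rw [if_pos hxp, hxp]
          · have hRy : R ≤ ‖stereographic' n x₀ x‖ := by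
              by_contra hlt
              push_neg at hlt
              exact hq ⟨stereographic' n x₀ x, mem_closedBall_zero_iff.mpr hlt.le,
                left_inv' x₀ hxp⟩
            have hs1 : 1 - (t : ℝ) ≤ 1 := by
              have := t.2.1; linarith
            rw [if_neg hxp, alexK_fix (⇑G) hGfix hs1 hRy, left_inv' x₀ hxp]
      · have h1 : ContinuousAt (fun q :
            (sphere (0 : EuclideanSpace ℝ (Fin (n + 1))) 1) × (Set.Icc (0:ℝ) 1) =>
            (stereographic' n p).symm
              (alexK G (stereographic' n p q.1) (1 - (q.2 : ℝ)))) (x₀, t₀) := by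
          have hpair : ContinuousAt (fun q :
              (sphere (0 : EuclideanSpace ℝ (Fin (n + 1))) 1) × (Set.Icc (0:ℝ) 1) =>
              ((stereographic' n p q.1 : EuclideanSpace ℝ (Fin n)), (1 - (q.2 : ℝ)))) (x₀, t₀) := by
            refine ContinuousAt.prodMk ?_ ?_
            · exact ((stereographic' n p).continuousAt
                (by rw [stereographic'_source]; exact hx₀)).comp continuousAt_fst
            · exact (continuous_const.sub
                (continuous_subtype_val.comp continuous_snd)).continuousAt
          exact ((symm_continuous p).continuousAt).comp ((hKcont.continuousAt).comp hpair)
        refine h1.congr ?_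
        have hopen : IsOpen {q :
            (sphere (0 : EuclideanSpace ℝ (Fin (n + 1))) 1) × (Set.Icc (0:ℝ) 1) | q.1 ≠ p} :=
          isOpen_compl_singleton.preimage continuous_fst
        refine Filter.eventuallyEq_of_mem (hopen.mem_nhds hx₀) ?_
        rintro ⟨x, t⟩ hq
        exact (if_neg hq).symm
    · -- at time 0 the homotopy is `f`
      intro x
      show (if x = p then p
        else (stereographic' n p).symm
          (alexK G (stereographic' n p x) (1 - (((0 : Set.Icc (0:ℝ) 1)) : ℝ)))) = f x
      have h0 : (((0 : Set.Icc (0:ℝ) 1)) : ℝ) = 0 := rfl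
      rw [h0, sub_zero]
      by_cases hx : x = p
      · rw [if_pos hx, hx, hfp]
      · have hfxp : f x ≠ p := fun h => hx (f.injective (by rw [h, hfp]))
        rw [if_neg hx, alexK_one]
        have hGx : G (stereographic' n p x) = stereographic' n p (f x) := by
          rw [hGapp, left_inv' p hx]
        rw [hGx, left_inv' p hfxp]
    · -- at time 1 the homotopy is the identity
      intro x
      show (if x = p then p
        else (stereographic' n p).symm
          (alexK G (stereographic' n p x) (1 - (((1 : Set.Icc (0:ℝ) 1)) : ℝ)))) = x
      have h1 : (((1 : Set.Icc (0:ℝ) 1)) : ℝ) = 1 := rfl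
      rw [h1, sub_self, alexK_of_not_pos _ _ (lt_irrefl 0)]
      by_cases hx : x = p
      · rw [if_pos hx, hx]
      · rw [if_neg hx, left_inv' p hx]
    · -- every time slice is a homeomorphism
      intro t
      by_cases hpos : 0 < 1 - (t : ℝ)
      · have hs1 : 1 - (t : ℝ) ≤ 1 := by
          have := t.2.1; linarith
        let Gs : EuclideanSpace ℝ (Fin n) ≃ₜ EuclideanSpace ℝ (Fin n) :=
          (Homeomorph.smulOfNeZero ((1 - (t : ℝ))⁻¹) (inv_ne_zero hpos.ne')).trans
            (G.trans (Homeomorph.smulOfNeZero (1 - (t : ℝ)) hpos.ne'))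
        have hGsapp : ∀ y, Gs y = alexK G y (1 - (t : ℝ)) := by
          intro y
          rw [alexK_pos G y hpos]
          rfl
        have hGsfix : ∀ y, R ≤ ‖y‖ → Gs y = y := fun y hy => by
          rw [hGsapp y]; exact alexK_fix G hGfix hs1 hy
        obtain ⟨e, he⟩ := exists_extension p Gs hGsfix
        refine ⟨e, fun x => ?_⟩
        rw [he x]
        show _ = (if x = p then p
          else (stereographic' n p).symm (alexK G (stereographic' n p x) (1 - (t : ℝ))))
        by_cases hx : x = p
        · rw [if_pos hx, if_pos hx]
        · rw [if_neg hx, if_neg hx, hGsapp]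
      · refine ⟨Homeomorph.refl _, fun x => ?_⟩
        show x = (if x = p then p
          else (stereographic' n p).symm (alexK G (stereographic' n p x) (1 - (t : ℝ))))
        rw [alexK_of_not_pos _ _ hpos]
        by_cases hx : x = p
        · rw [if_pos hx, hx]
        · rw [if_neg hx, left_inv' p hx]
end
end
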